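/- Let f_{μν} be a nonzero real antisymmetric 4×4 matrix and k ∈ ℝ⁴ a covector satisfying the Hadamard discontinuity relations of the vacuum Maxwell equations: f^{μν} k_ν = 0 for all μ, and the cyclic identity f_{μν} k_λ + f_{νλ} k_μ + f_{λμ} k_ν = 0 for all μ, ν, λ. Then k is a null vector of the Minkowski metric: η^{μν} k_μ k_ν = 0. -/
import Mathlib


open scoped BigOperators

noncomputable section

/-- The Minkowski metric η = diag(1,-1,-1,-1) (same components for η_{μν} and η^{μν}). -/
def η (μ ν : Fin 4) : ℝ := if μ = ν then (if μ = 0 then 1 else -1) else 0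

/-- Hadamard discontinuity relations of the vacuum Maxwell equations force
the wave covector to be null in the Minkowski metric. -/
theorem maxwell_discontinuity_null
    (f : Fin 4 → Fin 4 → ℝ) (k : Fin 4 → ℝ)
    (hfa : ∀ μ ν, f μ ν = - f ν μ)
    (hf0 : f ≠ 0)
    -- raised components f^{μν} = η^{μα}η^{νβ} f_{αβ}
    (fup : Fin 4 → Fin 4 → ℝ)
    (hfup : ∀ μ ν, fup μ ν = ∑ α, ∑ b, η μ α * η ν b * f α b)
    -- f^{μν} k_ν = 0
    (h1 : ∀ μ, ∑ ν, fup μ ν * k ν = 0)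
    -- cyclic identity
    (h2 : ∀ μ ν l, f μ ν * k l + f ν l * k μ + f l μ * k ν = 0) :
    ∑ μ, ∑ ν, η μ ν * k μ * k ν = 0 := by
  -- f_{αβ} k^β = 0
  have hk : ∀ α : Fin 4, f α 0 * k 0 - f α 1 * k 1 - f α 2 * k 2 - f α 3 * k 3 = 0 := by
    intro α
    have e0 := h1 0; have e1 := h1 1; have e2 := h1 2; have e3 := h1 3
    simp only [hfup, Fin.sum_univ_four, η] at e0 e1 e2 e3
    simp (config := { decide := true }) at e0 e1 e2 e3
    fin_cases α
    · show f 0 0 * k 0 - f 0 1 * k 1 - f 0 2 * k 2 - f 0 3 * k 3 = 0; linarith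
    · show f 1 0 * k 0 - f 1 1 * k 1 - f 1 2 * k 2 - f 1 3 * k 3 = 0; linarith
    · show f 2 0 * k 0 - f 2 1 * k 1 - f 2 2 * k 2 - f 2 3 * k 3 = 0; linarith
    · show f 3 0 * k 0 - f 3 1 * k 1 - f 3 2 * k 2 - f 3 3 * k 3 = 0; linarith
  have key : ∀ μ ν : Fin 4, f μ ν * (k 0 ^ 2 - k 1 ^ 2 - k 2 ^ 2 - k 3 ^ 2) = 0 := by
    intro μ ν
    linear_combination k 0 * h2 μ ν 0 - k 1 * h2 μ ν 1 - k 2 * h2 μ ν 2 - k 3 * h2 μ ν 3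
      - k μ * hk ν + k ν * hk μ
      - k ν * k 0 * hfa 0 μ + k ν * k 1 * hfa 1 μ + k ν * k 2 * hfa 2 μ + k ν * k 3 * hfa 3 μ
  obtain ⟨μ, ν, hμν⟩ : ∃ μ ν, f μ ν ≠ 0 := by
    by_contra h
    push_neg at h
    exact hf0 (funext fun μ => funext fun ν => h μ ν)
  have hK : k 0 ^ 2 - k 1 ^ 2 - k 2 ^ 2 - k 3 ^ 2 = 0 :=
    (mul_eq_zero.mp (key μ ν)).resolve_left hμν
  simp only [Fin.sum_univ_four, η]
  simp (config := { decide := true })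
  linarith
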